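/- Let (V, E, s, t) be a finite graph with cycle space Z₁ ⊆ C₁ = (E → ZMod 2). Let W be a finite-dimensional vector space over ZMod 2 equipped with a nondegenerate alternating bilinear form B, let Q be the set of quadratic refinements of B, and let p : Z₁ → W be any map (playing the role of the homology class map of an embedding in a genus-g surface, card W = 2^{2g}). Then in the polynomial ring ℤ[X_e : e ∈ E] one has the averaging identity Σ_{q ∈ Q} ( Σ_{β ∈ W} χ(q β) ) · ( Σ_{ξ ∈ Z₁} χ(q (p ξ)) · x(|ξ|) ) = (card W) · Σ_{ξ ∈ Z₁} x(|ξ|). (Equivalently: 2^g · Z^I = Σ_{q∈Q} (−1)^{Arf(q)} Z_q, the final step in the paper's proof of Theorem 1, where Z^I = Σ_{ξ∈Z₁} x(|ξ|) is the Ising partition function.) -/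

import Mathlib

open scoped BigOperators

/-- The boundary map `∂ : C₁ → C₀` of a finite graph `(V, E, s, t)`:
the `ZMod 2`-linear map sending the indicator chain of an edge `e` to
(indicator of `s e`) + (indicator of `t e`). -/
def bdry {V E : Type*} [Fintype E] [DecidableEq V]
    (s t : E → V) (ξ : E → ZMod 2) : V → ZMod 2 :=
  fun v => ∑ e, ξ e * ((if s e = v then 1 else 0) + (if t e = v then 1 else 0))

/-- The support of a 1-chain: the set of edges where it equals 1. -/
def chainSupp {E : Type*} [Fintype E] (ξ : E → ZMod 2) : Finset E :=
  Finset.univ.filter (fun e => ξ e = 1)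

/-- The sign character `χ : ZMod 2 → ℤ`, `χ 0 = 1`, `χ 1 = -1`. -/
def chi : ZMod 2 → ℤ := fun x => if x = 0 then 1 else -1

/-- The monomial `x(S) = ∏_{e ∈ S} X_e` in `ℤ[X_e : e ∈ E]`. -/
noncomputable def xmon {E : Type*} (S : Finset E) : MvPolynomial E ℤ :=
  ∏ e ∈ S, MvPolynomial.X e

section Helpers

lemma z2cases : ∀ c : ZMod 2, c = 0 ∨ c = 1 := by decide
lemma z2add_self : ∀ a : ZMod 2, a + a = 0 := by decide
lemma z2cancel : ∀ a b : ZMod 2, a + b + b = a := by decide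
lemma z2ne : ∀ a : ZMod 2, a ≠ 0 → a = 1 := by decide
lemma chi_sq : ∀ a : ZMod 2, chi a * chi a = 1 := by decide
lemma chi_inv : ∀ a b u v : ZMod 2, u + v = 1 →
    chi a * chi b + chi (a + u) * chi (b + v) = 0 := by decide
lemma z2id1 : ∀ a b c d e : ZMod 2, (a + b) + (c + d) = (a + c + e) + (b + d + e) := by decide
lemma z2id2 : ∀ a b c d e : ZMod 2, (a + b + e) + (c + d) = (a + c) + (b + d) + e := by decide
lemma z2ne_add_one : ∀ a : ZMod 2, a + 1 ≠ a := by decide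

end Helpers

section Bil

variable {W : Type*} [AddCommGroup W] [Module (ZMod 2) W] [Fintype W] [DecidableEq W]
variable (B : W → W → ZMod 2)

lemma Bzero_left (hB₁ : ∀ x y z : W, B (x + y) z = B x z + B y z) (y : W) : B 0 y = 0 := by
  have h := hB₁ 0 0 y
  rw [add_zero] at h
  calc B 0 y = B 0 y + B 0 y := h
  _ = 0 := z2add_self _

lemma Bzero_right (hB₂ : ∀ x y z : W, B z (x + y) = B z x + B z y) (y : W) : B y 0 = 0 := by
  have h := hB₂ 0 0 y
  rw [add_zero] at h
  calc B y 0 = B y 0 + B y 0 := h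
  _ = 0 := z2add_self _

lemma Bsymm (hB₁ : ∀ x y z : W, B (x + y) z = B x z + B y z)
    (hB₂ : ∀ x y z : W, B z (x + y) = B z x + B z y)
    (hBalt : ∀ x : W, B x x = 0) (x y : W) : B x y = B y x := by
  have h := hBalt (x + y)
  rw [hB₁, hB₂, hB₂, hBalt, hBalt] at h
  -- h : (0 + B x y) + (B y x + 0) = 0
  have : ∀ a b : ZMod 2, (0 + a) + (b + 0) = 0 → a = b := by decide
  exact this _ _ h

/-- bundled bilinear form -/
noncomputable def Bil (hB₁ : ∀ x y z : W, B (x + y) z = B x z + B y z)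
    (hB₂ : ∀ x y z : W, B z (x + y) = B z x + B z y) :
    W →ₗ[ZMod 2] W →ₗ[ZMod 2] ZMod 2 :=
  LinearMap.mk₂ (ZMod 2) B hB₁
    (fun c x y => by
      rcases z2cases c with h | h <;> subst h
      · simp [Bzero_left B hB₁ y]
      · simp)
    (fun z x y => hB₂ x y z)
    (fun c z x => by
      rcases z2cases c with h | h <;> subst h
      · simp [Bzero_right B hB₂ z]
      · simp)

end Bil

section QR

variable {W : Type*} [AddCommGroup W] [Module (ZMod 2) W] [Fintype W] [DecidableEq W]
variable (B : W → W → ZMod 2)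

lemma exists_qr (hB₁ : ∀ x y z : W, B (x + y) z = B x z + B y z)
    (hB₂ : ∀ x y z : W, B z (x + y) = B z x + B z y)
    (hBalt : ∀ x : W, B x x = 0) :
    ∃ q : W → ZMod 2, ∀ x y : W, q (x + y) = q x + q y + B x y := by
  haveI : Fact (Nat.Prime 2) := ⟨Nat.prime_two⟩
  classical
  set b := Module.finBasis (ZMod 2) W with hb
  set n := Module.finrank (ZMod 2) W
  set S : Finset (Fin n × Fin n) := Finset.univ.filter (fun ij => ij.1 < ij.2) with hS
  refine ⟨fun x => ∑ ij ∈ S, b.repr x ij.1 * b.repr x ij.2 * B (b ij.1) (b ij.2), ?_⟩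
  intro x y
  dsimp only
  have hrep : ∀ (i : Fin n), b.repr (x + y) i = b.repr x i + b.repr y i := by
    intro i; rw [map_add]; rfl
  -- expand each term
  have expand : ∀ ij ∈ S,
      b.repr (x+y) ij.1 * b.repr (x+y) ij.2 * B (b ij.1) (b ij.2)
      = b.repr x ij.1 * b.repr x ij.2 * B (b ij.1) (b ij.2)
        + b.repr y ij.1 * b.repr y ij.2 * B (b ij.1) (b ij.2)
        + (b.repr x ij.1 * b.repr y ij.2 + b.repr x ij.2 * b.repr y ij.1) * B (b ij.1) (b ij.2) := by
    intro ij _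
    rw [hrep, hrep]; ring
  rw [Finset.sum_congr rfl expand, Finset.sum_add_distrib, Finset.sum_add_distrib]
  congr 1
  -- remains: ∑ ij ∈ S, (x_i y_j + x_j y_i) B_ij = B x y
  -- B x y = ∑ i ∑ j x_i y_j B_ij
  have hBxy : B x y = ∑ i : Fin n, ∑ j : Fin n,
      b.repr x i * b.repr y j * B (b i) (b j) := by
    have h1 : x = ∑ i : Fin n, b.repr x i • b i := (b.sum_repr x).symm
    have h2 : y = ∑ j : Fin n, b.repr y j • b j := (b.sum_repr y).symm
    calc B x y = Bil B hB₁ hB₂ x y := rfl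
    _ = Bil B hB₁ hB₂ (∑ i : Fin n, b.repr x i • b i) (∑ j : Fin n, b.repr y j • b j) := by
        rw [← h1, ← h2]
    _ = ∑ i : Fin n, ∑ j : Fin n, b.repr x i * b.repr y j * B (b i) (b j) := by
        simp only [map_sum, map_smul, LinearMap.sum_apply, LinearMap.smul_apply,
          smul_eq_mul, Bil, LinearMap.mk₂_apply]
        rw [Finset.sum_comm]
        refine Finset.sum_congr rfl (fun i _ => ?_)
        rw [Finset.mul_sum]
        exact Finset.sum_congr rfl (fun j _ => by ring)
  rw [hBxy, ← Finset.sum_product']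
  -- split univ product into S, swap S, diagonal
  have hsplit : (Finset.univ : Finset (Fin n × Fin n)) = Finset.univ := rfl
  rw [show (Finset.univ ×ˢ Finset.univ : Finset (Fin n × Fin n)) = Finset.univ from
    Finset.univ_product_univ]
  set f : Fin n × Fin n → ZMod 2 := fun ij => b.repr x ij.1 * b.repr y ij.2 * B (b ij.1) (b ij.2) with hf
  have key : ∑ ij : Fin n × Fin n, f ij
      = ∑ ij ∈ S, f ij + ∑ ij ∈ Finset.univ.filter (fun ij : Fin n × Fin n => ij.2 < ij.1), f ij := by
    rw [← Finset.sum_filter_add_sum_filter_not Finset.univ (fun ij : Fin n × Fin n => ij.1 < ij.2) f]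
    congr 1
    have : Finset.univ.filter (fun ij : Fin n × Fin n => ¬ ij.1 < ij.2)
        = Finset.univ.filter (fun ij : Fin n × Fin n => ij.2 < ij.1)
          ∪ Finset.univ.filter (fun ij : Fin n × Fin n => ij.1 = ij.2) := by
      ext ij
      simp only [Finset.mem_filter, Finset.mem_univ, true_and, Finset.mem_union]
      constructor
      · intro h
        rcases lt_or_eq_of_le (not_lt.mp h) with h' | h'
        · exact Or.inl h'
        · exact Or.inr h'.symm
      · rintro (h | h)
        · exact not_lt.mpr h.le
        · rw [h]; exact lt_irrefl _
    rw [this, Finset.sum_union]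
    · have hdiag : ∑ ij ∈ Finset.univ.filter (fun ij : Fin n × Fin n => ij.1 = ij.2), f ij = 0 := by
        apply Finset.sum_eq_zero
        intro ij hij
        simp only [Finset.mem_filter] at hij
        rw [hf]; simp only
        rw [hij.2, hBalt, mul_zero]
      rw [hdiag, add_zero]
    · exact Finset.disjoint_filter.mpr (fun ij _ h h' => by rw [h'] at h; exact lt_irrefl _ h)
  rw [key]
  have hT : ∑ ij ∈ Finset.univ.filter (fun ij : Fin n × Fin n => ij.2 < ij.1), f ij
      = ∑ ij ∈ S, b.repr x ij.2 * b.repr y ij.1 * B (b ij.1) (b ij.2) := by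
    refine Finset.sum_nbij' Prod.swap Prod.swap ?_ ?_ ?_ ?_ ?_
    · intro a ha
      simp only [Finset.mem_filter, Finset.mem_univ, true_and] at ha
      simp only [hS, Finset.mem_filter, Finset.mem_univ, true_and, Prod.fst_swap,
        Prod.snd_swap]
      exact ha
    · intro a ha
      simp only [hS, Finset.mem_filter, Finset.mem_univ, true_and] at ha
      simp only [Finset.mem_filter, Finset.mem_univ, true_and, Prod.fst_swap, Prod.snd_swap]
      exact ha
    · intro a _; rfl
    · intro a _; rfl
    · intro a _
      simp only [hf, Prod.fst_swap, Prod.snd_swap]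
      rw [Bsymm B hB₁ hB₂ hBalt]
  rw [hT, ← Finset.sum_add_distrib]
  exact Finset.sum_congr rfl (fun ij _ => by ring)

end QR

section Card

variable {W : Type*} [AddCommGroup W] [Module (ZMod 2) W] [Fintype W] [DecidableEq W]

lemma additive_zero (f : W → ZMod 2) (hf : ∀ x y : W, f (x + y) = f x + f y) : f 0 = 0 := by
  have h := hf 0 0
  rw [add_zero] at h
  calc f 0 = f 0 + f 0 := h
  _ = 0 := z2add_self _

lemma additive_smul (f : W → ZMod 2) (hf : ∀ x y : W, f (x + y) = f x + f y)
    (c : ZMod 2) (v : W) : f (c • v) = c * f v := by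
  rcases z2cases c with h | h <;> subst h
  · rw [zero_smul, additive_zero f hf, zero_mul]
  · rw [one_smul, one_mul]

lemma additive_sum {ι : Type*} (f : W → ZMod 2) (hf : ∀ x y : W, f (x + y) = f x + f y)
    (s : Finset ι) (g : ι → W) : f (∑ i ∈ s, g i) = ∑ i ∈ s, f (g i) := by
  classical
  induction s using Finset.induction_on with
  | empty => simpa using additive_zero f hf
  | insert _ _ h ih => rw [Finset.sum_insert h, Finset.sum_insert h, hf, ih]

lemma card_additive :
    (Finset.univ.filter (fun f : W → ZMod 2 => ∀ x y : W, f (x + y) = f x + f y)).card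
      = Fintype.card W := by
  haveI : Fact (Nat.Prime 2) := ⟨Nat.prime_two⟩
  classical
  set n := Module.finrank (ZMod 2) W with hn
  set b : Module.Basis (Fin n) (ZMod 2) W := Module.finBasis (ZMod 2) W with hb
  have hcard : Fintype.card W = Fintype.card (Fin n → ZMod 2) := by
    rw [Module.card_fintype b, Fintype.card_fun]
  rw [hcard, ← Finset.card_univ]
  refine Finset.card_bij' (fun f _ => fun j : Fin n => f (b j))
    (fun g _ => fun w => ∑ i : Fin n, b.repr w i * g i) ?_ ?_ ?_ ?_
  · intro f _; exact Finset.mem_univ _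
  · intro g _
    simp only [Finset.mem_filter, Finset.mem_univ, true_and]
    intro x y
    rw [← Finset.sum_add_distrib]
    refine Finset.sum_congr rfl (fun i _ => ?_)
    rw [map_add]
    show (b.repr x i + b.repr y i) * g i = _
    ring
  · intro f hf
    simp only [Finset.mem_filter, Finset.mem_univ, true_and] at hf
    funext w
    conv_rhs => rw [← b.sum_repr w]
    rw [additive_sum f hf]
    refine Finset.sum_congr rfl (fun i _ => ?_)
    rw [additive_smul f hf]
  · intro g _
    funext j
    have : ∀ i : Fin n, b.repr (b j) i = if j = i then 1 else 0 := by
      intro i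
      rw [b.repr_self]
      exact Finsupp.single_apply
    simp only [this]
    rw [Finset.sum_congr rfl (fun i _ => by rw [ite_mul, one_mul, zero_mul])]
    rw [Finset.sum_ite_eq (Finset.univ) j g]
    simp

lemma card_qr (B : W → W → ZMod 2)
    (hB₁ : ∀ x y z : W, B (x + y) z = B x z + B y z)
    (hB₂ : ∀ x y z : W, B z (x + y) = B z x + B z y)
    (hBalt : ∀ x : W, B x x = 0) :
    (Finset.univ.filter
      (fun q : W → ZMod 2 => ∀ x y : W, q (x + y) = q x + q y + B x y)).card
      = Fintype.card W := by
  classical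
  obtain ⟨q₀, hq₀⟩ := exists_qr B hB₁ hB₂ hBalt
  rw [← card_additive (W := W)]
  refine Finset.card_bij' (fun q _ => fun x => q x + q₀ x)
    (fun f _ => fun x => f x + q₀ x) ?_ ?_ ?_ ?_
  · intro q hq
    simp only [Finset.mem_filter, Finset.mem_univ, true_and] at hq ⊢
    intro x y
    rw [hq, hq₀]
    have : ∀ a b c d e : ZMod 2, (a + b + e) + (c + d + e) = (a + c) + (b + d) := by decide
    exact this _ _ _ _ _
  · intro f hf
    simp only [Finset.mem_filter, Finset.mem_univ, true_and] at hf ⊢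
    intro x y
    rw [hf, hq₀]
    have : ∀ a b c d e : ZMod 2, (a + b) + (c + d + e) = (a + c) + (b + d) + e := by decide
    exact this _ _ _ _ _
  · intro q _; funext x; exact z2cancel _ _
  · intro f _; funext x; exact z2cancel _ _

lemma key_sum (B : W → W → ZMod 2)
    (hB₁ : ∀ x y z : W, B (x + y) z = B x z + B y z)
    (hB₂ : ∀ x y z : W, B z (x + y) = B z x + B z y)
    (hBalt : ∀ x : W, B x x = 0)
    (hBnd : ∀ x : W, (∀ y : W, B x y = 0) → x = 0)
    (w : W) :
    (∑ q ∈ Finset.univ.filter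
        (fun q : W → ZMod 2 => ∀ x y : W, q (x + y) = q x + q y + B x y),
      ∑ β : W, chi (q β) * chi (q w)) = (Fintype.card W : ℤ) := by
  classical
  rw [Finset.sum_comm]
  rw [Finset.sum_eq_single_of_mem w (Finset.mem_univ w)]
  · rw [Finset.sum_congr rfl (fun q _ => chi_sq (q w))]
    rw [Finset.sum_const, nsmul_eq_mul, mul_one]
    rw [card_qr B hB₁ hB₂ hBalt]
  · intro β _ hβ
    have hww : w + w = 0 := by
      calc w + w = (2 : ZMod 2) • w := (two_smul _ w).symm
      _ = (0 : ZMod 2) • w := by rw [show (2 : ZMod 2) = 0 by decide]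
      _ = 0 := zero_smul _ _
    have hne : β + w ≠ 0 := by
      intro h
      apply hβ
      calc β = β + (w + w) := by rw [hww, add_zero]
      _ = (β + w) + w := by abel
      _ = w := by rw [h, zero_add]
    have : ∃ c : W, B (β + w) c ≠ 0 := by
      by_contra hc
      push_neg at hc
      exact hne (hBnd _ hc)
    obtain ⟨c, hc⟩ := this
    have hc1 : B β c + B w c = 1 := by
      rw [← hB₁]
      exact z2ne _ hc
    refine Finset.sum_involution (fun q _ => fun x => q x + B x c) ?_ ?_ ?_ ?_
    · intro q _
      exact chi_inv _ _ _ _ hc1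
    · intro q _ _ h
      have h2 := congrFun h (β + w)
      rw [z2ne _ hc] at h2
      exact z2ne_add_one _ h2
    · intro q hq
      simp only [Finset.mem_filter, Finset.mem_univ, true_and] at hq ⊢
      intro x y
      rw [hq, hB₁]
      exact z2id2 _ _ _ _ _
    · intro q _
      funext x
      exact z2cancel _ _

end Card

theorem averaging_identity
    {V E W : Type*} [Fintype V] [Fintype E] [DecidableEq V] [DecidableEq E]
    [AddCommGroup W] [Module (ZMod 2) W] [Fintype W] [DecidableEq W]
    (s t : E → V)
    (B : W → W → ZMod 2)
    (hB₁ : ∀ x y z : W, B (x + y) z = B x z + B y z)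
    (hB₂ : ∀ x y z : W, B z (x + y) = B z x + B z y)
    (hBalt : ∀ x : W, B x x = 0)
    (hBnd : ∀ x : W, (∀ y : W, B x y = 0) → x = 0)
    (p : (E → ZMod 2) → W) :
    (∑ q ∈ Finset.univ.filter
        (fun q : W → ZMod 2 => ∀ x y : W, q (x + y) = q x + q y + B x y),
      ((∑ β : W, chi (q β) : ℤ) : MvPolynomial E ℤ) *
        ∑ ξ ∈ Finset.univ.filter (fun ξ : E → ZMod 2 => bdry s t ξ = 0),
          (chi (q (p ξ)) : MvPolynomial E ℤ) * xmon (chainSupp ξ)) =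
    ((Fintype.card W : ℤ) : MvPolynomial E ℤ) *
      ∑ ξ ∈ Finset.univ.filter (fun ξ : E → ZMod 2 => bdry s t ξ = 0),
        xmon (chainSupp ξ) := by
  classical
  simp only [Finset.mul_sum]
  rw [Finset.sum_comm]
  refine Finset.sum_congr rfl (fun ξ _ => ?_)
  have hk := key_sum B hB₁ hB₂ hBalt hBnd (p ξ)
  have h2 : (∑ q ∈ Finset.univ.filter
        (fun q : W → ZMod 2 => ∀ x y : W, q (x + y) = q x + q y + B x y),
      ((∑ β : W, chi (q β) : ℤ) : MvPolynomial E ℤ) *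
        ((chi (q (p ξ)) : ℤ) * xmon (chainSupp ξ)))
      = ((∑ q ∈ Finset.univ.filter
        (fun q : W → ZMod 2 => ∀ x y : W, q (x + y) = q x + q y + B x y),
          ∑ β : W, chi (q β) * chi (q (p ξ)) : ℤ) : MvPolynomial E ℤ) * xmon (chainSupp ξ) := by
    push_cast
    rw [Finset.sum_mul]
    refine Finset.sum_congr rfl (fun q _ => ?_)
    rw [Finset.sum_mul, Finset.sum_mul]
    refine Finset.sum_congr rfl (fun β _ => by ring)
  rw [h2, hk]
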